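/- Let n ≥ 2, φ : ℤ^n → V an S_n-equivariant epimorphism onto a finite abelian S_n-group. If the restriction of φ to ℤ^{n-1} × {0} is not surjective and V is not isomorphic to (ℤ/2ℤ)^n, then V has at least 2^{n+1} elements. -/

import Mathlib

open AddSubgroup

lemma two_mul_le_of_dvd_lt {a b : ℕ} (h : a ∣ b) (hlt : a < b) (ha : 0 < a) :
    2 * a ≤ b := by
  obtain ⟨t, rfl⟩ := h
  have ht : 2 ≤ t := by
    rcases Nat.lt_or_ge t 2 with h2 | h2
    · interval_cases t <;> omega
    · exact h2
  calc 2 * a = a * 2 := by ring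
  _ ≤ a * t := Nat.mul_le_mul_left a ht

lemma prime_pow_step {p a b m : ℕ} (hp : p.Prime) (hab : a ∣ b) (hlt : a < b)
    (ham : a ∣ p ^ m) (hbm : b ∣ p ^ m) : p * a ≤ b := by
  obtain ⟨i, hi, rfl⟩ := (Nat.dvd_prime_pow hp).1 ham
  obtain ⟨j, hj, rfl⟩ := (Nat.dvd_prime_pow hp).1 hbm
  have hij : i < j := (Nat.pow_lt_pow_iff_right hp.one_lt).1 hlt
  calc p * p ^ i = p ^ (i + 1) := by ring
  _ ≤ p ^ j := Nat.pow_le_pow_right hp.pos hij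

lemma two_pow_succ_le_three_pow : ∀ n, 2 ≤ n → 2 ^ (n + 1) ≤ 3 ^ n := by
  intro n hn
  induction n with
  | zero => omega
  | succ m ih =>
    rcases Nat.lt_or_ge m 2 with hm | hm
    · interval_cases m
      · omega
      · norm_num
    · have := ih hm
      calc 2 ^ (m + 2) = 2 * 2 ^ (m + 1) := by ring
      _ ≤ 2 * 3 ^ m := by omega
      _ ≤ 3 * 3 ^ m := by omega
      _ = 3 ^ (m + 1) := by ring

lemma prime_chain_card {V : Type} [AddCommGroup V] [Fintype V] {p n m : ℕ} (hp : p.Prime)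
    (G : ℕ → AddSubgroup V) (hG0 : Nat.card (G 0) = 1)
    (hdvd : ∀ k, k < n → Nat.card (G k) ∣ Nat.card (G (k + 1)))
    (hlt : ∀ k, k < n → Nat.card (G k) < Nat.card (G (k + 1)))
    (hdm : ∀ k, Nat.card (G k) ∣ p ^ m) :
    p ^ n ≤ Nat.card (G n) := by
  suffices h : ∀ k, k ≤ n → p ^ k ≤ Nat.card (G k) from h n le_rfl
  intro k
  induction k with
  | zero => intro _; simp [hG0]
  | succ t ih =>
    intro htn
    have h13 := ih (by omega)
    have h14 := prime_pow_step hp (hdvd t (by omega)) (hlt t (by omega))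
      (hdm t) (hdm (t + 1))
    calc p ^ (t + 1) = p * p ^ t := by ring
    _ ≤ p * Nat.card (G t) := Nat.mul_le_mul_left p h13
    _ ≤ Nat.card (G (t + 1)) := h14

/-- If the restriction of an `S_n`-equivariant epimorphism `φ : ℤ^n → V` to
`ℤ^{n-1} × {0}` is not surjective and `V ≇ (ℤ/2ℤ)^n`, then `|V| ≥ 2^{n+1}`. -/
theorem equivariant_epi_card_ge
    (n : ℕ) (hn : 2 ≤ n) (V : Type) [AddCommGroup V] [Fintype V]
    [DistribMulAction (Equiv.Perm (Fin n)) V]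
    (φ : (Fin n → ℤ) →+ V) (hsurj : Function.Surjective φ)
    (hequiv : ∀ (σ : Equiv.Perm (Fin n)) (x : Fin n → ℤ),
      φ (fun i => x (σ⁻¹ i)) = σ • φ x)
    (hnotsurj : ¬ ∀ v : V, ∃ x : Fin n → ℤ,
        x ⟨n - 1, by omega⟩ = 0 ∧ φ x = v)
    (hne : ¬ Nonempty (V ≃+ (Fin n → ZMod 2))) :
    2 ^ (n + 1) ≤ Fintype.card V := by
  classical
  set lst : Fin n := ⟨n - 1, by omega⟩ with hlst
  set i0 : Fin n := ⟨0, by omega⟩ with hi0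
  set v : Fin n → V := fun i => φ (Pi.single i 1) with hv
  -- equivariance on generators
  have hact : ∀ (σ : Equiv.Perm (Fin n)) (i : Fin n), σ • v i = v (σ i) := by
    intro σ i
    have h1 := hequiv σ (Pi.single i 1)
    rw [← h1]
    congr 1
    funext j
    simp only [Pi.single_apply]
    by_cases h : σ⁻¹ j = i
    · rw [if_pos h, if_pos]
      rw [← h]; exact (σ.apply_symm_apply j).symm
    · rw [if_neg h, if_neg]
      intro hc
      exact h (by rw [hc]; exact Equiv.Perm.inv_eq_iff_eq.mpr rfl)
  -- φ as sum of generators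
  have hφ : ∀ x : Fin n → ℤ, φ x = ∑ i, x i • v i := by
    intro x
    have hx : x = ∑ i, x i • (Pi.single i 1 : Fin n → ℤ) := by
      conv_lhs => rw [pi_eq_sum_univ x]
      refine Finset.sum_congr rfl fun i _ => ?_
      congr 1
      funext j
      simp [Pi.single_apply, eq_comm]
    conv_lhs => rw [hx]
    rw [map_sum]
    exact Finset.sum_congr rfl fun i _ => map_zsmul φ _ _
  have htop : AddSubgroup.closure (Set.range v) = ⊤ := by
    rw [eq_top_iff]
    intro w _
    obtain ⟨x, rfl⟩ := hsurj w
    rw [hφ]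
    exact sum_mem fun i _ => zsmul_mem (subset_closure (Set.mem_range_self i)) _
  -- transport of closure membership along the action
  have hmem_smul : ∀ (σ : Equiv.Perm (Fin n)) (S : Set V) (x : V),
      x ∈ AddSubgroup.closure S →
      σ • x ∈ AddSubgroup.closure ((fun y => σ • y) '' S) := by
    intro σ S x hx
    have h2 := AddMonoidHom.map_closure (DistribMulAction.toAddMonoidHom V σ) S
    have h3 : (DistribMulAction.toAddMonoidHom V σ) x ∈
        (AddSubgroup.closure S).map (DistribMulAction.toAddMonoidHom V σ) :=
      mem_map_of_mem _ hx
    rw [h2] at h3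
    simpa using h3
  -- the "restricted image" subgroup
  set K : AddSubgroup (Fin n → ℤ) :=
    AddMonoidHom.ker (Pi.evalAddMonoidHom (fun _ : Fin n => ℤ) lst) with hK
  set S₀ : AddSubgroup V := K.map φ with hS₀def
  have hS₀ : S₀ ≠ ⊤ := by
    intro h
    apply hnotsurj
    intro w
    have hw : w ∈ S₀ := by rw [h]; trivial
    obtain ⟨x, hx, hxw⟩ := hw
    refine ⟨x, ?_, hxw⟩
    simpa [hK, AddMonoidHom.mem_ker] using hx
  have hrest : AddSubgroup.closure (v '' {i | i ≠ lst}) ≤ S₀ := by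
    rw [closure_le]
    rintro _ ⟨i, hi, rfl⟩
    exact ⟨Pi.single i 1, by
      simp [hK, AddMonoidHom.mem_ker, Pi.single_eq_of_ne (Ne.symm hi)], rfl⟩
  have hvlast : v lst ∉ AddSubgroup.closure (v '' {i | i ≠ lst}) := by
    intro hmem
    apply hS₀
    rw [eq_top_iff]
    refine le_trans ?_ hrest
    rw [← htop]
    rw [closure_le]
    rintro _ ⟨i, rfl⟩
    by_cases h : i = lst
    · subst h; exact hmem
    · exact subset_closure ⟨i, h, rfl⟩
  have hvj : ∀ j, v j ∉ AddSubgroup.closure (v '' {i | i ≠ j}) := by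
    intro j hmem
    apply hvlast
    have h4 := hmem_smul (Equiv.swap j lst) _ _ hmem
    rw [hact, Equiv.swap_apply_left] at h4
    have hswapset : (Equiv.swap j lst) '' {i | i ≠ j} = {i | i ≠ lst} := by
      ext i
      simp only [Set.mem_image, Set.mem_setOf_eq]
      constructor
      · rintro ⟨a, ha, rfl⟩
        intro hc
        exact ha ((Equiv.swap j lst).injective
          (by rw [Equiv.swap_apply_left, hc] : Equiv.swap j lst a = Equiv.swap j lst j).symm ▸ rfl)
      · intro hi
        refine ⟨Equiv.swap j lst i, ?_, Equiv.swap_apply_self _ _ _⟩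
        intro hc
        apply hi
        exact (Equiv.swap j lst).injective
          (by rw [Equiv.swap_apply_right, hc] : Equiv.swap j lst i = Equiv.swap j lst lst)
    have himg : (fun y => Equiv.swap j lst • y) '' (v '' {i | i ≠ j})
        = v '' {i | i ≠ lst} := by
      rw [← Set.image_comp]
      have hco : (fun y => Equiv.swap j lst • y) ∘ v = v ∘ (Equiv.swap j lst) := by
        funext i; exact hact _ i
      rw [hco, Set.image_comp, hswapset]
    rw [himg] at h4
    exact h4
  -- the chain
  set G : ℕ → AddSubgroup V := fun k => AddSubgroup.closure (v '' {i | (i : ℕ) < k}) with hG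
  have hG0 : G 0 = ⊥ := by
    have h5 : {i : Fin n | (i : ℕ) < 0} = ∅ := by ext i; simp
    simp [hG, h5]
  have hGn : G n = ⊤ := by
    have h5 : {i : Fin n | (i : ℕ) < n} = Set.univ := by ext i; simp [i.isLt]
    rw [hG]
    simp only [h5, Set.image_univ]
    exact htop
  have hmono : ∀ k, G k ≤ G (k + 1) :=
    fun k => AddSubgroup.closure_mono (Set.image_mono (fun i hi => by
      simp only [Set.mem_setOf_eq] at hi ⊢; omega))
  have hstrict : ∀ k, k < n → G k < G (k + 1) := by
    intro k hk
    refine lt_of_le_of_ne (hmono k) fun heq => ?_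
    have hkmem : v ⟨k, hk⟩ ∈ G (k + 1) :=
      subset_closure ⟨⟨k, hk⟩, by simp, rfl⟩
    rw [← heq] at hkmem
    have hle : G k ≤ AddSubgroup.closure (v '' {i | i ≠ (⟨k, hk⟩ : Fin n)}) := by
      apply AddSubgroup.closure_mono
      apply Set.image_mono
      intro i hi
      simp only [Set.mem_setOf_eq] at hi ⊢
      intro hik
      rw [hik] at hi
      simp at hi
    exact hvj ⟨k, hk⟩ (hle hkmem)
  -- cards
  have hcpos : ∀ k, 0 < Nat.card (G k) := fun k => Nat.card_pos
  have hcdvd : ∀ k, k < n → Nat.card (G k) ∣ Nat.card (G (k + 1)) :=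
    fun k hk => card_dvd_of_le (hmono k)
  have hclt : ∀ k, k < n → Nat.card (G k) < Nat.card (G (k + 1)) := by
    intro k hk
    have hss : (G k : Set V) ⊂ (G (k + 1) : Set V) :=
      SetLike.coe_ssubset_coe.2 (hstrict k hk)
    have h6 := Set.ncard_lt_ncard hss (Set.toFinite _)
    rwa [← Nat.card_coe_set_eq, ← Nat.card_coe_set_eq] at h6
  have hc0 : Nat.card (G 0) = 1 := by rw [hG0]; simp
  have hcV : Nat.card (G n) = Fintype.card V := by
    rw [hGn, AddSubgroup.card_top, Nat.card_eq_fintype_card]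
  -- order of v i0
  obtain ⟨d, hd⟩ : ∃ d, addOrderOf (v i0) = d := ⟨_, rfl⟩
  have hG1 : Nat.card (G 1) = d := by
    have h7 : {i : Fin n | (i : ℕ) < 1} = {i0} := by
      ext i
      simp [Fin.ext_iff, hi0, Nat.lt_one_iff]
    rw [hG]
    simp only [h7, Set.image_singleton]
    rw [← zmultiples_eq_closure, Nat.card_zmultiples, hd]
  have horder : ∀ i, addOrderOf (v i) = d := by
    intro i
    have h8 := hact (Equiv.swap i0 i) i0
    rw [Equiv.swap_apply_left] at h8
    rw [← h8, ← hd]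
    exact addOrderOf_injective (DistribMulAction.toAddMonoidHom V (Equiv.swap i0 i))
      (MulAction.injective _) (v i0)
  have hdpos : 0 < d := hd ▸ addOrderOf_pos _
  have hv0ne : v i0 ≠ 0 := by
    intro h9
    exact hvj i0 (h9 ▸ zero_mem _)
  have hd1 : d ≠ 1 := fun h9 => hv0ne (AddMonoid.addOrderOf_eq_one_iff.1 (h9 ▸ hd))
  have hann : ∀ x : V, d • x = 0 := by
    intro x
    have hx : x ∈ AddSubgroup.closure (Set.range v) := by rw [htop]; trivial
    have hle : AddSubgroup.closure (Set.range v) ≤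
        AddMonoidHom.ker (zsmulAddGroupHom (d : ℤ) : V →+ V) := by
      rw [closure_le]
      rintro _ ⟨i, rfl⟩
      simp only [SetLike.mem_coe, AddMonoidHom.mem_ker, zsmulAddGroupHom_apply,
        natCast_zsmul]
      rw [← horder i]
      exact addOrderOf_nsmul_eq_zero (v i)
    have h10 := hle hx
    simp only [AddMonoidHom.mem_ker, zsmulAddGroupHom_apply, natCast_zsmul] at h10
    exact h10
  -- doubling chain
  have hdouble : ∀ k, k < n → 2 * Nat.card (G k) ≤ Nat.card (G (k + 1)) :=
    fun k hk => two_mul_le_of_dvd_lt (hcdvd k hk) (hclt k hk) (hcpos k)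
  have hchain1 : ∀ j, j + 1 ≤ n → d * 2 ^ j ≤ Nat.card (G (j + 1)) := by
    intro j
    induction j with
    | zero =>
      intro _
      rw [pow_zero, mul_one, hG1]
    | succ t ih =>
      intro hm
      have h10 := ih (by omega)
      have h11 := hdouble (t + 1) (by omega)
      calc d * 2 ^ (t + 1) = 2 * (d * 2 ^ t) := by ring
      _ ≤ 2 * Nat.card (G (t + 1)) := by omega
      _ ≤ Nat.card (G (t + 2)) := h11
  -- case analysis on d
  rcases Nat.lt_or_ge d 4 with hd4 | hd4
  · have hd23 : d = 2 ∨ d = 3 := by omega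
    rcases hd23 with rfl | rfl
    · -- d = 2
      haveI : Fact (Nat.Prime 2) := ⟨Nat.prime_two⟩
      letI : Module (ZMod 2) V := AddCommGroup.zmodModule hann
      have hcardV : Fintype.card V = 2 ^ Module.finrank (ZMod 2) V := by
        have h12 := Module.card_eq_pow_finrank (K := ZMod 2) (V := V)
        rwa [ZMod.card] at h12
      have hdvdm : ∀ k, Nat.card (G k) ∣ 2 ^ Module.finrank (ZMod 2) V := by
        intro k
        have h13 := card_addSubgroup_dvd_card (G k)
        have h13' : Nat.card V = 2 ^ Module.finrank (ZMod 2) V := by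
          rw [Nat.card_eq_fintype_card]; exact hcardV
        rwa [h13'] at h13
      have hkey : 2 ^ n ≤ Fintype.card V := by
        have h14 := prime_chain_card Nat.prime_two G hc0 hcdvd hclt hdvdm
        rwa [hcV] at h14
      rw [hcardV] at hkey
      have hnm : n ≤ Module.finrank (ZMod 2) V :=
        (Nat.pow_le_pow_iff_right (by norm_num)).1 hkey
      rcases Nat.lt_or_ge n (Module.finrank (ZMod 2) V) with hlt2 | hge2
      · rw [hcardV]
        exact Nat.pow_le_pow_right (by norm_num) (by omega)
      · have hfr : Module.finrank (ZMod 2) V = n := le_antisymm hge2 hnm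
        exfalso
        apply hne
        have hequivV : Nonempty (V ≃ₗ[ZMod 2] (Fin n → ZMod 2)) :=
          FiniteDimensional.nonempty_linearEquiv_of_finrank_eq
            (by rw [hfr, Module.finrank_fintype_fun_eq_card, Fintype.card_fin])
        obtain ⟨e⟩ := hequivV
        exact ⟨e.toAddEquiv⟩
    · -- d = 3
      haveI : Fact (Nat.Prime 3) := ⟨Nat.prime_three⟩
      letI : Module (ZMod 3) V := AddCommGroup.zmodModule hann
      have hcardV : Fintype.card V = 3 ^ Module.finrank (ZMod 3) V := by
        have h12 := Module.card_eq_pow_finrank (K := ZMod 3) (V := V)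
        rwa [ZMod.card] at h12
      have hdvdm : ∀ k, Nat.card (G k) ∣ 3 ^ Module.finrank (ZMod 3) V := by
        intro k
        have h13 := card_addSubgroup_dvd_card (G k)
        have h13' : Nat.card V = 3 ^ Module.finrank (ZMod 3) V := by
          rw [Nat.card_eq_fintype_card]; exact hcardV
        rwa [h13'] at h13
      have hkey : 3 ^ n ≤ Fintype.card V := by
        have h14 := prime_chain_card Nat.prime_three G hc0 hcdvd hclt hdvdm
        rwa [hcV] at h14
      exact le_trans (two_pow_succ_le_three_pow n hn) hkey
  · -- d ≥ 4
    have h15 := hchain1 (n - 1) (by omega)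
    have h16 : n - 1 + 1 = n := by omega
    rw [h16, hcV] at h15
    have h18 : 2 ^ (n + 1) = 4 * 2 ^ (n - 1) := by
      have h19 : n + 1 = (n - 1) + 2 := by omega
      rw [h19, pow_add]
      ring
    have h17 : 2 ^ (n + 1) ≤ d * 2 ^ (n - 1) := by
      rw [h18]
      exact Nat.mul_le_mul_right _ hd4
    omega
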